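/- Let X be a Banach space with δ̄*_X(t) ≥ c·t^q for all t ∈ [0,1] (some c > 0, q ≥ 1), and let δ(t) = ∫_0^t (δ̄*_X(s)/s) ds. Then δ is a 1-Lipschitz Orlicz function satisfying δ̄*_X(t/2) ≤ δ(t) ≤ δ̄*_X(t) for all t ≥ 0. -/

import Mathlib

open Filter NormedSpace

/-- `E` is a weak*-closed subspace of the dual `X*`. -/
def WeakStarClosed (X : Type*) [NormedAddCommGroup X] [NormedSpace ℝ X]
    (E : Submodule ℝ (StrongDual ℝ X)) : Prop :=
  IsClosed (StrongDual.toWeakDual '' (E : Set (StrongDual ℝ X)))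

/-- The weak* modulus of asymptotic uniform convexity:
`δ̄*_X(t) = inf_{x* ∈ S_{X*}} sup_E inf_{y* ∈ S_E} (‖x* + t·y*‖ - 1)`, where `E` runs over
weak*-closed finite-codimensional subspaces of `X*`. -/
noncomputable def aucStarModulus (X : Type*) [NormedAddCommGroup X] [NormedSpace ℝ X]
    (t : ℝ) : ℝ :=
  sInf {a : ℝ | ∃ f : StrongDual ℝ X, ‖f‖ = 1 ∧
    a = sSup {b : ℝ | ∃ E : Submodule ℝ (StrongDual ℝ X), WeakStarClosed X E ∧
      FiniteDimensional ℝ (StrongDual ℝ X ⧸ E) ∧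
      b = sInf {c : ℝ | ∃ g ∈ E, ‖g‖ = 1 ∧ c = ‖f + t • g‖ - 1}}}

section Aux

variable {X : Type*} [NormedAddCommGroup X] [NormedSpace ℝ X]

private def innerSet (f : StrongDual ℝ X) (t : ℝ) (E : Submodule ℝ (StrongDual ℝ X)) : Set ℝ :=
  {c : ℝ | ∃ g ∈ E, ‖g‖ = 1 ∧ c = ‖f + t • g‖ - 1}

private def supSet (f : StrongDual ℝ X) (t : ℝ) : Set ℝ :=
  {b : ℝ | ∃ E : Submodule ℝ (StrongDual ℝ X), WeakStarClosed X E ∧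
      FiniteDimensional ℝ (StrongDual ℝ X ⧸ E) ∧ b = sInf (innerSet f t E)}

private def outSet (X : Type*) [NormedAddCommGroup X] [NormedSpace ℝ X] (t : ℝ) : Set ℝ :=
  {a : ℝ | ∃ f : StrongDual ℝ X, ‖f‖ = 1 ∧ a = sSup (supSet f t)}

private lemma auc_eq (t : ℝ) : aucStarModulus X t = sInf (outSet X t) := rfl

private lemma innerSet_bddBelow (f : StrongDual ℝ X) (t : ℝ) (E : Submodule ℝ (StrongDual ℝ X)) :
    BddBelow (innerSet f t E) := by
  refine ⟨-1, ?_⟩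
  rintro c ⟨g, -, -, rfl⟩
  have := norm_nonneg (f + t • g)
  linarith

private lemma top_weakStarClosed : WeakStarClosed X (⊤ : Submodule ℝ (StrongDual ℝ X)) := by
  unfold WeakStarClosed
  rw [Submodule.top_coe, Set.image_univ,
    (StrongDual.toWeakDual (𝕜 := ℝ) (E := X)).surjective.range_eq]
  exact isClosed_univ

private lemma top_findim : FiniteDimensional ℝ (StrongDual ℝ X ⧸ (⊤ : Submodule ℝ (StrongDual ℝ X))) := by
  haveI : Subsingleton (StrongDual ℝ X ⧸ (⊤ : Submodule ℝ (StrongDual ℝ X))) :=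
    Submodule.Quotient.subsingleton_iff.mpr rfl
  exact Module.Finite.of_surjective (0 : ℝ →ₗ[ℝ] _) (fun y => ⟨0, Subsingleton.elim _ _⟩)

private lemma sInf_innerSet_le {f : StrongDual ℝ X} (hf : ‖f‖ = 1) {t : ℝ} (ht : 0 ≤ t)
    (E : Submodule ℝ (StrongDual ℝ X)) : sInf (innerSet f t E) ≤ t := by
  rcases (innerSet f t E).eq_empty_or_nonempty with h | ⟨c, hc⟩
  · rw [h, Real.sInf_empty]; exact ht
  · obtain ⟨g, hg, hg1, rfl⟩ := hc
    refine (csInf_le (innerSet_bddBelow f t E) ⟨g, hg, hg1, rfl⟩).trans ?_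
    have h2 := norm_add_le f (t • g)
    rw [norm_smul, hg1, Real.norm_eq_abs, abs_of_nonneg ht] at h2
    linarith

private lemma supSet_nonempty (f : StrongDual ℝ X) (t : ℝ) : (supSet f t).Nonempty :=
  ⟨_, ⊤, top_weakStarClosed, top_findim, rfl⟩

private lemma supSet_bddAbove {f : StrongDual ℝ X} (hf : ‖f‖ = 1) {t : ℝ} (ht : 0 ≤ t) :
    BddAbove (supSet f t) := by
  refine ⟨t, ?_⟩
  rintro b ⟨E, -, -, rfl⟩
  exact sInf_innerSet_le hf ht E

private lemma sSup_supSet_le {f : StrongDual ℝ X} (hf : ‖f‖ = 1) {t : ℝ} (ht : 0 ≤ t) :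
    sSup (supSet f t) ≤ t := by
  refine Real.sSup_le ?_ ht
  rintro b ⟨E, -, -, rfl⟩
  exact sInf_innerSet_le hf ht E

private lemma sSup_supSet_nonneg {f : StrongDual ℝ X} (hf : ‖f‖ = 1) {t : ℝ} (ht : 0 ≤ t) :
    0 ≤ sSup (supSet f t) := by
  have key : ∀ ε : ℝ, 0 < ε → -ε ≤ sSup (supSet f t) := by
    intro ε hε
    obtain ⟨x, hx1, hx2⟩ : ∃ x : X, ‖x‖ ≤ 1 ∧ 1 - ε ≤ f x := by
      rcases le_or_gt 1 ε with h | h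
      · exact ⟨0, by simp, by simp; linarith⟩
      · obtain ⟨x, hx, hfx⟩ := f.exists_lt_apply_of_lt_opNorm (r := 1 - ε) (by rw [hf]; linarith)
        rw [Real.norm_eq_abs] at hfx
        rcases le_or_gt 0 (f x) with h0 | h0
        · rw [abs_of_nonneg h0] at hfx
          exact ⟨x, hx.le, hfx.le⟩
        · rw [abs_of_neg h0] at hfx
          refine ⟨-x, by simpa using hx.le, ?_⟩
          rw [map_neg]; linarith
    set φ : StrongDual ℝ X →ₗ[ℝ] ℝ :=
      { toFun := fun g => g x
        map_add' := fun g h => rfl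
        map_smul' := fun c g => rfl } with hφ
    have hw : WeakStarClosed X (LinearMap.ker φ) := by
      have himg : StrongDual.toWeakDual '' ((LinearMap.ker φ : Submodule ℝ (StrongDual ℝ X)) : Set (StrongDual ℝ X))
          = {h : WeakDual ℝ X | h x = 0} := by
        ext h
        constructor
        · rintro ⟨g, hg, rfl⟩
          exact LinearMap.mem_ker.mp hg
        · intro hh
          refine ⟨StrongDual.toWeakDual.symm h, ?_, by simp⟩
          have : (StrongDual.toWeakDual.symm h) x = h x := rfl
          exact LinearMap.mem_ker.mpr (by rw [hφ]; simpa [this] using hh)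
      unfold WeakStarClosed
      rw [himg]
      exact isClosed_eq (WeakDual.eval_continuous x) continuous_const
    haveI hfd : FiniteDimensional ℝ (StrongDual ℝ X ⧸ LinearMap.ker φ) :=
      Module.Finite.equiv φ.quotKerEquivRange.symm
    have hbmem : sInf (innerSet f t (LinearMap.ker φ)) ∈ supSet f t :=
      ⟨LinearMap.ker φ, hw, hfd, rfl⟩
    have hble : -ε ≤ sInf (innerSet f t (LinearMap.ker φ)) := by
      refine Real.le_sInf ?_ (by linarith)
      rintro cc ⟨g, hg, hg1, rfl⟩
      have hgx : g x = 0 := LinearMap.mem_ker.mp hg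
      have h1 : (f + t • g) x ≤ ‖f + t • g‖ := by
        calc (f + t • g) x ≤ |(f + t • g) x| := le_abs_self _
          _ = ‖(f + t • g) x‖ := (Real.norm_eq_abs _).symm
          _ ≤ ‖f + t • g‖ * ‖x‖ := (f + t • g).le_opNorm x
          _ ≤ ‖f + t • g‖ := mul_le_of_le_one_right (norm_nonneg _) hx1
      have h2 : (f + t • g) x = f x + t * g x := by simp
      rw [h2, hgx] at h1
      linarith
    exact hble.trans (le_csSup (supSet_bddAbove hf ht) hbmem)
  by_contra hneg
  push_neg at hneg
  have := key (-(sSup (supSet f t)) / 2) (by linarith)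
  linarith

private lemma outSet_bddBelow {t : ℝ} (ht : 0 ≤ t) : BddBelow (outSet X t) := by
  refine ⟨0, ?_⟩
  rintro a ⟨f, hf, rfl⟩
  exact sSup_supSet_nonneg hf ht

private lemma auc_nonneg {t : ℝ} (ht : 0 ≤ t) : 0 ≤ aucStarModulus X t := by
  rw [auc_eq]
  refine Real.sInf_nonneg ?_
  rintro a ⟨f, hf, rfl⟩
  exact sSup_supSet_nonneg hf ht

private lemma auc_le (hfex : ∃ f : StrongDual ℝ X, ‖f‖ = 1) {t : ℝ} (ht : 0 ≤ t) :
    aucStarModulus X t ≤ t := by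
  obtain ⟨f, hf⟩ := hfex
  rw [auc_eq]
  exact (csInf_le (outSet_bddBelow ht) ⟨f, hf, rfl⟩).trans (sSup_supSet_le hf ht)

private lemma auc_scale (hfex : ∃ f : StrongDual ℝ X, ‖f‖ = 1) {s t : ℝ} (hs : 0 < s) (hst : s ≤ t) :
    aucStarModulus X s ≤ (s / t) * aucStarModulus X t := by
  have ht : 0 < t := hs.trans_le hst
  set r : ℝ := s / t with hrdef
  have hr : 0 < r := div_pos hs ht
  have hr1 : r ≤ 1 := (div_le_one ht).mpr hst
  have hrt : r * t = s := div_mul_cancel₀ s ht.ne'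
  -- pointwise estimate
  have hpt : ∀ (f g : StrongDual ℝ X), ‖f‖ = 1 → ‖g‖ = 1 →
      ‖f + s • g‖ - 1 ≤ r * (‖f + t • g‖ - 1) := by
    intro f g hf hg
    have h1 : (1 - r) • f + r • (f + t • g) = f + s • g := by
      rw [smul_add, smul_smul, hrt, ← add_assoc, ← add_smul]
      simp
    have h2 : ‖f + s • g‖ ≤ ‖(1 - r) • f‖ + ‖r • (f + t • g)‖ := by
      rw [← h1]; exact norm_add_le _ _
    rw [norm_smul, norm_smul, hf, Real.norm_eq_abs, Real.norm_eq_abs,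
      abs_of_nonneg (by linarith : (0:ℝ) ≤ 1 - r), abs_of_nonneg hr.le] at h2
    nlinarith [norm_nonneg (f + t • g)]
  -- inf level
  have hinf : ∀ (f : StrongDual ℝ X), ‖f‖ = 1 → ∀ E : Submodule ℝ (StrongDual ℝ X),
      sInf (innerSet f s E) ≤ r * sInf (innerSet f t E) := by
    intro f hf E
    rcases (innerSet f t E).eq_empty_or_nonempty with he | hne
    · have he' : innerSet f s E = ∅ := by
        rw [Set.eq_empty_iff_forall_notMem] at he ⊢
        rintro c ⟨g, hg, hg1, rfl⟩
        exact he _ ⟨g, hg, hg1, rfl⟩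
      rw [he, he', Real.sInf_empty, mul_zero]
    · have hd : sInf (innerSet f s E) / r ≤ sInf (innerSet f t E) := by
        refine le_csInf hne ?_
        rintro c ⟨g, hg, hg1, rfl⟩
        rw [div_le_iff₀ hr]
        calc sInf (innerSet f s E) ≤ ‖f + s • g‖ - 1 :=
              csInf_le (innerSet_bddBelow f s E) ⟨g, hg, hg1, rfl⟩
          _ ≤ r * (‖f + t • g‖ - 1) := hpt f g hf hg1
          _ = (‖f + t • g‖ - 1) * r := mul_comm _ _
      calc sInf (innerSet f s E) = sInf (innerSet f s E) / r * r := by field_simp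
        _ ≤ sInf (innerSet f t E) * r := mul_le_mul_of_nonneg_right hd hr.le
        _ = r * sInf (innerSet f t E) := mul_comm _ _
  -- sup level
  have hsup : ∀ (f : StrongDual ℝ X), ‖f‖ = 1 →
      sSup (supSet f s) ≤ r * sSup (supSet f t) := by
    intro f hf
    refine Real.sSup_le ?_ (mul_nonneg hr.le (sSup_supSet_nonneg hf ht.le))
    rintro b ⟨E, hE1, hE2, rfl⟩
    calc sInf (innerSet f s E) ≤ r * sInf (innerSet f t E) := hinf f hf E
      _ ≤ r * sSup (supSet f t) :=
          mul_le_mul_of_nonneg_left (le_csSup (supSet_bddAbove hf ht.le) ⟨E, hE1, hE2, rfl⟩) hr.le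
  -- outer inf level
  obtain ⟨f₀, hf₀⟩ := hfex
  have hd : aucStarModulus X s / r ≤ sInf (outSet X t) := by
    refine le_csInf ⟨_, f₀, hf₀, rfl⟩ ?_
    rintro a ⟨f, hf, rfl⟩
    rw [div_le_iff₀ hr]
    calc aucStarModulus X s ≤ sSup (supSet f s) :=
          csInf_le (outSet_bddBelow hs.le) ⟨f, hf, rfl⟩
      _ ≤ r * sSup (supSet f t) := hsup f hf
      _ = sSup (supSet f t) * r := mul_comm _ _
  rw [← auc_eq] at hd
  calc aucStarModulus X s = aucStarModulus X s / r * r := by field_simp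
    _ ≤ aucStarModulus X t * r := mul_le_mul_of_nonneg_right hd hr.le
    _ = r * aucStarModulus X t := mul_comm _ _

end Aux

/-- If `δ̄*_X(t) ≥ c·t^q` on `[0,1]` (for some `c > 0`, `q ≥ 1`), then
`δ(t) = ∫_0^t δ̄*_X(s)/s ds` is a `1`-Lipschitz Orlicz function with
`δ̄*_X(t/2) ≤ δ(t) ≤ δ̄*_X(t)` for all `t ≥ 0`. -/
theorem delta_orlicz (X : Type*) [NormedAddCommGroup X] [NormedSpace ℝ X] [CompleteSpace X]
    (c q : ℝ) (hc : 0 < c) (hq : 1 ≤ q)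
    (hlow : ∀ t ∈ Set.Icc (0 : ℝ) 1, c * t ^ q ≤ aucStarModulus X t) :
    let δ : ℝ → ℝ := fun t => ∫ s in (0 : ℝ)..t, aucStarModulus X s / s
    (ContinuousOn δ (Set.Ici 0) ∧ MonotoneOn δ (Set.Ici 0) ∧
      ConvexOn ℝ (Set.Ici 0) δ ∧ δ 0 = 0 ∧ Tendsto δ atTop atTop) ∧
    LipschitzOnWith 1 δ (Set.Ici 0) ∧
    ∀ t : ℝ, 0 ≤ t → aucStarModulus X (t / 2) ≤ δ t ∧ δ t ≤ aucStarModulus X t := by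
  intro δ
  let g : ℝ → ℝ := fun u => aucStarModulus X u / u
  have hδ : ∀ t : ℝ, δ t = ∫ s in (0 : ℝ)..t, g s := fun _ => rfl
  -- the dual sphere is nonempty
  have hfex : ∃ f : StrongDual ℝ X, ‖f‖ = 1 := by
    by_contra h
    push_neg at h
    have hout : outSet X 1 = ∅ := by
      rw [Set.eq_empty_iff_forall_notMem]
      rintro a ⟨f, hf, -⟩
      exact h f hf
    have h1 : aucStarModulus X 1 = 0 := by rw [auc_eq, hout, Real.sInf_empty]
    have h2 := hlow 1 ⟨zero_le_one, le_rfl⟩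
    rw [Real.one_rpow, mul_one, h1] at h2
    linarith
  -- basic facts about g
  have hgnn : ∀ u : ℝ, 0 ≤ u → 0 ≤ g u := fun u hu => div_nonneg (auc_nonneg hu) hu
  have hgle : ∀ u : ℝ, 0 ≤ u → g u ≤ 1 := by
    intro u hu
    rcases hu.eq_or_lt with h | h
    · show aucStarModulus X u / u ≤ 1
      rw [← h, div_zero]; exact zero_le_one
    · exact (div_le_one h).mpr (auc_le hfex hu)
  have hgmono : MonotoneOn g (Set.Ici 0) := by
    rintro a (ha : 0 ≤ a) b (hb : 0 ≤ b) hab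
    rcases ha.eq_or_lt with h | h
    · have h0 : g a = 0 := by show aucStarModulus X a / a = 0; rw [← h, div_zero]
      rw [h0]; exact hgnn b hb
    · have hb' : 0 < b := h.trans_le hab
      have hs := auc_scale hfex h hab
      show aucStarModulus X a / a ≤ aucStarModulus X b / b
      rw [div_le_div_iff₀ h hb']
      have hbne : b ≠ 0 := hb'.ne'
      have h2 : a / b * aucStarModulus X b * b = aucStarModulus X b * a := by
        field_simp
      calc aucStarModulus X a * b ≤ a / b * aucStarModulus X b * b :=
            mul_le_mul_of_nonneg_right hs hb'.le
        _ = aucStarModulus X b * a := h2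
  -- integrability
  have hint : ∀ a b : ℝ, 0 ≤ a → 0 ≤ b → IntervalIntegrable g MeasureTheory.volume a b := by
    intro a b ha hb
    refine (hgmono.mono ?_).intervalIntegrable
    intro x hx
    exact le_trans (le_min ha hb) hx.1
  -- splitting
  have hsplit : ∀ a b : ℝ, 0 ≤ a → 0 ≤ b → δ a + ∫ s in a..b, g s = δ b := by
    intro a b ha hb
    rw [hδ a, hδ b]
    exact intervalIntegral.integral_add_adjacent_intervals (hint 0 a le_rfl ha) (hint a b ha hb)
  -- integral bounds
  have hbound : ∀ a b : ℝ, 0 ≤ a → a ≤ b →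
      (b - a) * g a ≤ (∫ s in a..b, g s) ∧ (∫ s in a..b, g s) ≤ (b - a) * g b := by
    intro a b ha hab
    have hb : 0 ≤ b := ha.trans hab
    constructor
    · have h1 := intervalIntegral.integral_mono_on hab
        (intervalIntegrable_const (c := g a)) (hint a b ha hb)
        (fun u hu => hgmono (Set.mem_Ici.mpr ha) (Set.mem_Ici.mpr (ha.trans hu.1)) hu.1)
      rwa [intervalIntegral.integral_const, smul_eq_mul] at h1
    · have h1 := intervalIntegral.integral_mono_on hab
        (hint a b ha hb) (intervalIntegrable_const (c := g b))
        (fun u hu => hgmono (Set.mem_Ici.mpr (ha.trans hu.1)) (Set.mem_Ici.mpr hb) hu.2)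
      rwa [intervalIntegral.integral_const, smul_eq_mul] at h1
  have hδ0 : δ 0 = 0 := by rw [hδ 0, intervalIntegral.integral_same]
  -- monotone
  have hmonoδ : MonotoneOn δ (Set.Ici 0) := by
    rintro a (ha : 0 ≤ a) b (hb : 0 ≤ b) hab
    have h1 := hsplit a b ha hb
    have h2 : 0 ≤ ∫ s in a..b, g s :=
      intervalIntegral.integral_nonneg hab (fun u hu => hgnn u (ha.trans hu.1))
    show δ a ≤ δ b
    linarith
  -- Lipschitz
  have hlip : LipschitzOnWith 1 δ (Set.Ici 0) := by
    refine LipschitzOnWith.of_dist_le_mul ?_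
    intro x hx y hy
    have hx0 : 0 ≤ x := hx
    have hy0 : 0 ≤ y := hy
    rw [NNReal.coe_one, one_mul, Real.dist_eq, Real.dist_eq]
    have key : ∀ u v : ℝ, 0 ≤ u → u ≤ v → |δ v - δ u| ≤ |v - u| := by
      intro u v hu huv
      have hv : 0 ≤ v := hu.trans huv
      have h1 := hsplit u v hu hv
      have h2 := (hbound u v hu huv).2
      have h3 : 0 ≤ ∫ s in u..v, g s :=
        intervalIntegral.integral_nonneg huv (fun w hw => hgnn w (hu.trans hw.1))
      have h4 : g v ≤ 1 := hgle v hv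
      rw [abs_of_nonneg (by linarith), abs_of_nonneg (by linarith)]
      nlinarith
    rcases le_total x y with h | h
    · rw [abs_sub_comm, abs_sub_comm x y]; exact key x y hx0 h
    · exact key y x hy0 h
  -- convexity
  have hconv : ConvexOn ℝ (Set.Ici 0) δ := by
    refine convexOn_of_slope_mono_adjacent (convex_Ici 0) ?_
    intro x y z hx hz hxy hyz
    have hx0 : 0 ≤ x := hx
    have hy0 : 0 ≤ y := hx0.trans hxy.le
    have hz0 : 0 ≤ z := hy0.trans hyz.le
    have h1 := hsplit x y hx0 hy0
    have h2 := hsplit y z hy0 hz0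
    have hb1 := (hbound x y hx0 hxy.le).2
    have hb2 := (hbound y z hy0 hyz.le).1
    rw [div_le_div_iff₀ (sub_pos.mpr hxy) (sub_pos.mpr hyz)]
    have e1 : δ y - δ x ≤ (y - x) * g y := by linarith
    have e2 : (z - y) * g y ≤ δ z - δ y := by linarith
    have e3 := mul_le_mul_of_nonneg_right e1 (sub_pos.mpr hyz).le
    have e4 := mul_le_mul_of_nonneg_left e2 (sub_pos.mpr hxy).le
    nlinarith
  -- tendsto
  have hg1 : c ≤ g 1 := by
    have h2 := hlow 1 ⟨zero_le_one, le_rfl⟩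
    rw [Real.one_rpow, mul_one] at h2
    show c ≤ aucStarModulus X 1 / 1
    rw [div_one]; exact h2
  have htend : Tendsto δ atTop atTop := by
    have hlin : Tendsto (fun t : ℝ => δ 1 - c + c * t) atTop atTop :=
      tendsto_atTop_add_const_left atTop (δ 1 - c) (Tendsto.const_mul_atTop hc tendsto_id)
    refine tendsto_atTop_mono' atTop ?_ hlin
    filter_upwards [eventually_ge_atTop (1 : ℝ)] with t ht
    have h1 := hsplit 1 t zero_le_one (zero_le_one.trans ht)
    have hb := (hbound 1 t zero_le_one ht).1
    have h3 : (t - 1) * c ≤ (t - 1) * g 1 :=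
      mul_le_mul_of_nonneg_left hg1 (by linarith)
    linarith
  -- final bounds
  have hbnds : ∀ t : ℝ, 0 ≤ t → aucStarModulus X (t / 2) ≤ δ t ∧ δ t ≤ aucStarModulus X t := by
    intro t ht
    rcases ht.eq_or_lt with h | h
    · have hm0 : aucStarModulus X 0 = 0 := le_antisymm (auc_le hfex le_rfl) (auc_nonneg le_rfl)
      rw [← h]
      norm_num [hδ0, hm0]
    · have ht2 : 0 < t / 2 := by linarith
      have htne : t ≠ 0 := h.ne'
      have ht2ne : t / 2 ≠ 0 := ht2.ne'
      constructor
      · have h1 := hsplit (t / 2) t ht2.le ht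
        have hb := (hbound (t / 2) t ht2.le (by linarith)).1
        have hδhalf : 0 ≤ δ (t / 2) := by
          have := hmonoδ (Set.mem_Ici.mpr le_rfl) (Set.mem_Ici.mpr ht2.le) ht2.le
          linarith [hδ0]
        have heq : (t - t / 2) * g (t / 2) = aucStarModulus X (t / 2) := by
          show (t - t / 2) * (aucStarModulus X (t / 2) / (t / 2)) = aucStarModulus X (t / 2)
          field_simp
          ring
        linarith
      · have h1 := hsplit 0 t le_rfl ht
        have hb := (hbound 0 t le_rfl ht).2
        have heq : (t - 0) * g t = aucStarModulus X t := by
          show (t - 0) * (aucStarModulus X t / t) = aucStarModulus X t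
          rw [sub_zero]
          field_simp
        linarith [hδ0]
  exact ⟨⟨hlip.continuousOn, hmonoδ, hconv, hδ0, htend⟩, hlip, hbnds⟩
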